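/- For every natural number n ≥ 1, τ(B_n) > B_{⌊τ(n)/3⌋}, where τ denotes the number-of-divisors function, ⌊·⌋ the floor function, and B the balancing sequence. -/
import Mathlib

def B : ℕ → ℕ
  | 0 => 0
  | 1 => 1
  | (n + 2) => 6 * B (n + 1) - B n

def C : ℕ → ℕ
  | 0 => 1
  | 1 => 3
  | (n + 2) => 6 * C (n + 1) - C n

lemma step_aux : ∀ n : ℕ, B (n+1) = C n + 3 * B n ∧ C (n+1) = 3 * C n + 8 * B n := by
  intro n
  induction n with
  | zero => simp [B, C]
  | succ n ih =>
    obtain ⟨h1, h2⟩ := ih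
    constructor
    · show 6 * B (n+1) - B n = C (n+1) + 3 * B (n+1)
      omega
    · show 6 * C (n+1) - C n = 3 * C (n+1) + 8 * B (n+1)
      omega

lemma B_step (n : ℕ) : B (n+1) = C n + 3 * B n := (step_aux n).1
lemma C_step (n : ℕ) : C (n+1) = 3 * C n + 8 * B n := (step_aux n).2

lemma C_pos (n : ℕ) : 0 < C n := by
  induction n with
  | zero => simp [C]
  | succ n ih => rw [C_step]; omega

lemma B_lt_succ (n : ℕ) : B n < B (n+1) := by
  have h := B_step n
  have h2 := C_pos n
  omega

lemma B_pos {n : ℕ} (h : 1 ≤ n) : 0 < B n := by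
  have h2 : B 0 < B n := by
    induction n with
    | zero => omega
    | succ n ih =>
      rcases Nat.eq_zero_or_pos n with rfl | hn
      · simpa [B] using Nat.zero_lt_one
      · exact lt_trans (ih hn) (B_lt_succ n)
  simpa [B] using h2

lemma B_ne_zero {n : ℕ} (h : 1 ≤ n) : B n ≠ 0 := (B_pos h).ne'

lemma B_mono {m n : ℕ} (h : m < n) : B m < B n := by
  induction n with
  | zero => omega
  | succ n ih =>
    rcases Nat.lt_succ_iff_lt_or_eq.mp h with h' | rfl
    · exact lt_trans (ih h') (B_lt_succ n)
    · exact B_lt_succ m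

lemma add_aux (m : ℕ) : ∀ n : ℕ, B (m + n) = B m * C n + C m * B n ∧
    C (m + n) = C m * C n + 8 * B m * B n := by
  intro n
  induction n with
  | zero => simp [B, C]
  | succ n ih =>
    obtain ⟨h1, h2⟩ := ih
    have hb : B (m + n + 1) = C (m+n) + 3 * B (m+n) := B_step (m+n)
    have hc : C (m + n + 1) = 3 * C (m+n) + 8 * B (m+n) := C_step (m+n)
    have hBs := B_step n
    have hCs := C_step n
    constructor
    · show B (m + n + 1) = _
      rw [hb, h1, h2, hBs, hCs]; ring
    · show C (m + n + 1) = _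
      rw [hc, h1, h2, hBs, hCs]; ring

lemma B_add (m n : ℕ) : B (m + n) = B m * C n + C m * B n := (add_aux m n).1
lemma C_add (m n : ℕ) : C (m + n) = C m * C n + 8 * B m * B n := (add_aux m n).2

lemma pell (n : ℕ) : C n ^ 2 = 8 * B n ^ 2 + 1 := by
  induction n with
  | zero => simp [B, C]
  | succ n ih => rw [B_step, C_step]; ring_nf; ring_nf at ih; omega

lemma coprime_B_C (n : ℕ) : Nat.Coprime (B n) (C n) := by
  have h := pell n
  have h1 : Nat.gcd (B n) (C n) ∣ 1 := by
    have hc : Nat.gcd (B n) (C n) ∣ C n ^ 2 := Dvd.dvd.pow (Nat.gcd_dvd_right _ _) (by norm_num)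
    have hb : Nat.gcd (B n) (C n) ∣ 8 * B n ^ 2 := by
      exact Dvd.dvd.mul_left (Dvd.dvd.pow (Nat.gcd_dvd_left _ _) (by norm_num)) 8
    have := Nat.dvd_sub hc hb
    simpa [h] using this
  exact Nat.eq_one_of_dvd_one h1

lemma B_dvd {d n : ℕ} (h : d ∣ n) : B d ∣ B n := by
  obtain ⟨k, rfl⟩ := h
  induction k with
  | zero => simp [B]
  | succ k ih =>
    rw [Nat.mul_succ, B_add]
    exact Nat.dvd_add (Dvd.dvd.mul_right ih (C d)) (Dvd.dvd.mul_left dvd_rfl (C (d*k)))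

lemma gcd_B_add_self (m n : ℕ) : Nat.gcd (B m) (B (n + m)) = Nat.gcd (B m) (B n) := by
  rw [B_add n m]
  rw [Nat.gcd_add_mul_right_right (B m) (B n * C m) (C n)]
  exact Nat.Coprime.gcd_mul_right_cancel_right (B n) ((coprime_B_C m).symm)

lemma gcd_B_add_mul_self (m n : ℕ) : ∀ k, Nat.gcd (B m) (B (n + k * m)) = Nat.gcd (B m) (B n)
  | 0 => by simp
  | k + 1 => by
    rw [← gcd_B_add_mul_self m n k, add_mul, ← add_assoc, one_mul, gcd_B_add_self _ _]

lemma B_gcd (m n : ℕ) : B (Nat.gcd m n) = Nat.gcd (B m) (B n) := by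
  induction m, n using Nat.gcd.induction with
  | H0 => simp [B]
  | H1 m n _ h' =>
    rw [← Nat.gcd_rec m n] at h'
    conv_rhs => rw [← Nat.mod_add_div' n m]
    rwa [gcd_B_add_mul_self m (n % m) (n / m), Nat.gcd_comm (B m) _]

lemma rank_spec (p : ℕ) (hex : ∃ j, 0 < j ∧ p ∣ B j) :
    ∀ j, p ∣ B j ↔ Nat.find hex ∣ j := by
  obtain ⟨hr0, hrB⟩ := Nat.find_spec hex
  intro j
  constructor
  · intro hj
    rcases Nat.eq_zero_or_pos j with rfl | hjpos
    · exact Nat.dvd_zero _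
    · have hg : p ∣ B (Nat.gcd (Nat.find hex) j) := by
        rw [B_gcd]; exact Nat.dvd_gcd hrB hj
      have hgpos : 0 < Nat.gcd (Nat.find hex) j := Nat.gcd_pos_of_pos_right _ hjpos
      have hle : Nat.find hex ≤ Nat.gcd (Nat.find hex) j := Nat.find_min' hex ⟨hgpos, hg⟩
      have hge : Nat.gcd (Nat.find hex) j ≤ Nat.find hex :=
        Nat.le_of_dvd hr0 (Nat.gcd_dvd_left _ _)
      have : Nat.gcd (Nat.find hex) j = Nat.find hex := le_antisymm hge hle
      rw [← this]; exact Nat.gcd_dvd_right _ _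
  · intro hj
    exact dvd_trans hrB (B_dvd hj)

lemma exp_aux (r : ℕ) : ∀ m, 1 ≤ m → ∃ s t : ℕ,
    B (r*m) = m * C r ^ (m-1) * B r + B r ^ 3 * s ∧ C (r*m) = C r ^ m + B r ^ 2 * t := by
  intro m
  induction m with
  | zero => omega
  | succ m ih =>
    rcases Nat.eq_zero_or_pos m with rfl | hm
    · intro _; exact ⟨0, 0, by simp, by simp⟩
    · intro _
      obtain ⟨s, t, h1, h2⟩ := ih hm
      refine ⟨s * C r + t, t * C r + 8 * (m * C r ^ (m-1)) + 8 * B r ^ 2 * s, ?_, ?_⟩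
      · have : r * (m+1) = r * m + r := by ring
        rw [this, B_add, h1, h2]
        have hm1 : m - 1 + 1 = m := by omega
        calc (m * C r ^ (m-1) * B r + B r ^ 3 * s) * C r + (C r ^ m + B r ^ 2 * t) * B r
            = m * (C r ^ (m-1) * C r) * B r + C r ^ m * B r + B r ^3 * (s * C r + t) := by ring
          _ = (m+1) * C r ^ m * B r + B r ^ 3 * (s * C r + t) := by
              rw [← pow_succ, hm1]; ring
      · have : r * (m+1) = r * m + r := by ring
        rw [this, C_add, h1, h2]
        calc (C r ^ m + B r ^ 2 * t) * C r + 8 * (m * C r ^ (m-1) * B r + B r ^ 3 * s) * B r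
            = C r ^ m * C r + B r ^ 2 * (t * C r + 8 * (m * C r ^ (m-1)) + 8 * B r ^ 2 * s) := by
              have hm1 : m - 1 + 1 = m := by omega
              calc (C r ^ m + B r ^ 2 * t) * C r + 8 * (m * C r ^ (m-1) * B r + B r ^ 3 * s) * B r
                  = C r ^ m * C r + B r ^ 2 * (t * C r) + 8 * m * (C r ^ (m-1)) * B r ^ 2
                      + 8 * B r ^ 4 * s := by ring
                _ = _ := by ring
          _ = C r ^ (m+1) + B r ^ 2 * (t * C r + 8 * (m * C r ^ (m-1)) + 8 * B r ^ 2 * s) := by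
              rw [← pow_succ]

lemma fact_add_eq {p : ℕ} (hp : p.Prime) {x y a : ℕ} (hx : x ≠ 0)
    (hvx : x.factorization p = a) (hy : p^(a+1) ∣ y) : (x+y).factorization p = a := by
  have hxy : x + y ≠ 0 := by positivity
  have h1 : p ^ a ∣ x + y := by
    refine Nat.dvd_add ?_ (dvd_trans (pow_dvd_pow p (Nat.le_succ a)) hy)
    rw [hp.pow_dvd_iff_le_factorization hx, hvx]
  have h2 : ¬ p ^ (a+1) ∣ x + y := by
    intro h
    have hxx : p ^ (a+1) ∣ x := by
      have := Nat.dvd_sub h hy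
      simpa using this
    rw [hp.pow_dvd_iff_le_factorization hx, hvx] at hxx
    omega
  have hle : a ≤ (x+y).factorization p := by
    rwa [← hp.pow_dvd_iff_le_factorization hxy]
  have hlt : (x+y).factorization p < a + 1 := by
    by_contra hcon
    push_neg at hcon
    rw [← hp.pow_dvd_iff_le_factorization hxy] at hcon
    exact h2 hcon
  omega

lemma p_not_dvd_C {p r : ℕ} (hp : p.Prime) (hpr : p ∣ B r) : ¬ p ∣ C r := by
  intro hc
  have := Nat.dvd_gcd hpr hc
  rw [coprime_B_C r] at this
  exact hp.one_lt.ne' (Nat.eq_one_of_dvd_one this)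

lemma val_B_mul_of_not_dvd {p r m : ℕ} (hp : p.Prime) (hr : 1 ≤ r) (hpr : p ∣ B r)
    (hm : 1 ≤ m) (hpm : ¬ p ∣ m) :
    (B (r*m)).factorization p = (B r).factorization p := by
  obtain ⟨s, t, h1, _⟩ := exp_aux r m hm
  have hB : B (r*m) = B r * (m * C r ^ (m-1) + B r ^ 2 * s) := by rw [h1]; ring
  have hbr : B r ≠ 0 := B_ne_zero hr
  have hbrm : B (r*m) ≠ 0 := B_ne_zero (Nat.one_le_iff_ne_zero.mpr
    (Nat.mul_ne_zero (by omega) (by omega)))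
  have hbrak : ¬ p ∣ (m * C r ^ (m-1) + B r ^ 2 * s) := by
    intro h
    have h8 : p ∣ B r ^ 2 * s := Dvd.dvd.mul_right (Dvd.dvd.pow hpr (by norm_num)) s
    have h9 : p ∣ m * C r ^ (m-1) := (Nat.dvd_add_right h8).mp (by rwa [Nat.add_comm] at h)
    rcases (Nat.Prime.dvd_mul hp).mp h9 with h10 | h10
    · exact hpm h10
    · exact p_not_dvd_C hp hpr (hp.dvd_of_dvd_pow h10)
  have hbne : (m * C r ^ (m-1) + B r ^ 2 * s) ≠ 0 := by
    intro h; exact hbrm (by rw [hB, h, Nat.mul_zero])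
  rw [hB, Nat.factorization_mul hbr hbne]
  simp [Nat.factorization_eq_zero_of_not_dvd hbrak]

lemma val_B_mul_p {p r : ℕ} (hp : p.Prime) (hr : 1 ≤ r) (hpr : p ∣ B r) :
    (B (r*p)).factorization p = (B r).factorization p + 1 := by
  obtain ⟨s, t, h1, _⟩ := exp_aux r p hp.one_lt.le
  have hB : B (r*p) = B r * (p * C r ^ (p-1) + B r ^ 2 * s) := by rw [h1]; ring
  have hbr : B r ≠ 0 := B_ne_zero hr
  have hx : p * C r ^ (p-1) ≠ 0 :=
    Nat.mul_ne_zero hp.pos.ne' (pow_ne_zero _ (C_pos r).ne')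
  have hvx : (p * C r ^ (p-1)).factorization p = 1 := by
    have hc : ¬ p ∣ C r ^ (p-1) := fun h => p_not_dvd_C hp hpr (hp.dvd_of_dvd_pow h)
    rw [Nat.factorization_mul hp.pos.ne' (pow_ne_zero _ (C_pos r).ne'), hp.factorization]
    simp [Nat.factorization_eq_zero_of_not_dvd (p_not_dvd_C hp hpr)]
  have hy : p ^ 2 ∣ B r ^ 2 * s := Dvd.dvd.mul_right (pow_dvd_pow_of_dvd hpr 2) s
  have hbrak : (p * C r ^ (p-1) + B r ^ 2 * s).factorization p = 1 :=
    fact_add_eq hp hx hvx (by simpa using hy)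
  have hbne : (p * C r ^ (p-1) + B r ^ 2 * s) ≠ 0 := by
    intro h
    exact hx (by omega)
  rw [hB, Nat.factorization_mul hbr hbne]
  simp [hbrak]

lemma val_B_lte {p r : ℕ} (hp : p.Prime) (hr : 1 ≤ r) (hpr : p ∣ B r) :
    ∀ m, 1 ≤ m → (B (r*m)).factorization p = (B r).factorization p + m.factorization p := by
  intro m
  induction m using Nat.strong_induction_on generalizing r with
  | _ m ih =>
    intro hm
    by_cases hpm : p ∣ m
    · obtain ⟨m', rfl⟩ := hpm
      have hm' : 1 ≤ m' := by
        rcases Nat.eq_zero_or_pos m' with rfl | h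
        · simp at hm
        · exact h
      have hlt : m' < p * m' := by
        have h2 := hp.two_le
        nlinarith
      have h1 : r * (p * m') = (r * p) * m' := by ring
      have h2 : p ∣ B (r * p) := dvd_trans hpr (B_dvd ⟨p, rfl⟩)
      have hrp : 1 ≤ r * p := Nat.one_le_iff_ne_zero.mpr (Nat.mul_ne_zero (by omega) hp.pos.ne')
      have h3 := ih m' hlt (r := r * p) hrp h2 hm'
      rw [h1, h3, val_B_mul_p hp hr hpr]
      have h4 : (p * m').factorization p = 1 + m'.factorization p := by
        rw [Nat.factorization_mul hp.pos.ne' (by omega), hp.factorization]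
        simp [Finsupp.add_apply]
      omega
    · rw [val_B_mul_of_not_dvd hp hr hpr hm hpm,
        Nat.factorization_eq_zero_of_not_dvd hpm]
      simp
-- Part 3: key divisibility
open Finset in
lemma prime_prod_fact {S : Finset ℕ} (hS : ∀ q ∈ S, Nat.Prime q) (p : ℕ) :
    (∏ q ∈ S, q).factorization p = if p ∈ S then 1 else 0 := by
  rw [Nat.factorization_prod (fun q hq => (hS q hq).pos.ne')]
  rw [Finset.sum_apply']
  rw [Finset.sum_congr rfl (fun q hq => by rw [(hS q hq).factorization])]
  simp [Finsupp.single_apply]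

open Finset in
lemma key_dvd (d : ℕ) (hd : 2 ≤ d)
    (hnp : ∀ p, p.Prime → p ∣ B d → ∃ e, 1 ≤ e ∧ e < d ∧ p ∣ B e) :
    (∏ S ∈ d.primeFactors.powerset.filter (fun S => Even S.card), B (d / ∏ q ∈ S, q)) ∣
      d * ∏ S ∈ d.primeFactors.powerset.filter (fun S => ¬ Even S.card), B (d / ∏ q ∈ S, q) := by
  have hd0 : d ≠ 0 := by omega
  set P := d.primeFactors with hP
  have hπdvd : ∀ S ∈ P.powerset, (∏ q ∈ S, q) ∣ d := by
    intro S hS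
    rw [Finset.mem_powerset] at hS
    exact Finset.prod_primes_dvd d (fun q hq => (Nat.prime_of_mem_primeFactors (hS hq)).prime)
      (fun q hq => Nat.dvd_of_mem_primeFactors (hS hq))
  have hπpos : ∀ S : Finset ℕ, S ∈ P.powerset → 0 < ∏ q ∈ S, q := by
    intro S hS
    rw [Finset.mem_powerset] at hS
    exact Finset.prod_pos (fun q hq => (Nat.prime_of_mem_primeFactors (hS hq)).pos)
  have hmpos : ∀ S ∈ P.powerset, 1 ≤ d / ∏ q ∈ S, q := fun S hS =>
    Nat.div_pos (Nat.le_of_dvd (by omega) (hπdvd S hS)) (hπpos S hS)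
  have hmdvd : ∀ S ∈ P.powerset, (d / ∏ q ∈ S, q) ∣ d := fun S hS =>
    Nat.div_dvd_of_dvd (hπdvd S hS)
  have hBm0 : ∀ S ∈ P.powerset, B (d / ∏ q ∈ S, q) ≠ 0 := fun S hS => B_ne_zero (hmpos S hS)
  have hΨ0 : (∏ S ∈ P.powerset.filter (fun S => Even S.card), B (d / ∏ q ∈ S, q)) ≠ 0 :=
    Finset.prod_ne_zero_iff.mpr (fun S hS => hBm0 S (Finset.mem_filter.mp hS).1)
  have hΘ0 : (∏ S ∈ P.powerset.filter (fun S => ¬ Even S.card), B (d / ∏ q ∈ S, q)) ≠ 0 :=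
    Finset.prod_ne_zero_iff.mpr (fun S hS => hBm0 S (Finset.mem_filter.mp hS).1)
  rw [← Nat.factorization_le_iff_dvd hΨ0 (Nat.mul_ne_zero hd0 hΘ0), Finsupp.le_def]
  intro p
  by_cases hp : p.Prime
  swap
  · simp [Nat.factorization_eq_zero_of_not_prime _ hp]
  have hfact : ∀ (X : Finset (Finset ℕ)), X ⊆ P.powerset →
      (∏ S ∈ X, B (d / ∏ q ∈ S, q)).factorization p
        = ∑ S ∈ X, (B (d / ∏ q ∈ S, q)).factorization p := by
    intro X hX
    rw [Nat.factorization_prod (fun S hS => hBm0 S (hX hS))]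
    rw [Finset.sum_apply']
  rw [Nat.factorization_mul hd0 hΘ0, Finsupp.add_apply,
    hfact _ (Finset.filter_subset _ _), hfact _ (Finset.filter_subset _ _)]
  set F : Finset ℕ → ℕ := fun S => (B (d / ∏ q ∈ S, q)).factorization p with hF
  show ∑ S ∈ P.powerset.filter (fun S => Even S.card), F S ≤
    d.factorization p + ∑ S ∈ P.powerset.filter (fun S => ¬ Even S.card), F S
  by_cases hex : ∃ j, 0 < j ∧ p ∣ B j
  swap
  · have hz : ∀ S ∈ P.powerset.filter (fun S => Even S.card), F S = 0 := by
      intro S hS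
      have hS' := (Finset.mem_filter.mp hS).1
      exact Nat.factorization_eq_zero_of_not_dvd
        (fun hdvd => hex ⟨d / ∏ q ∈ S, q, hmpos S hS', hdvd⟩)
    rw [Finset.sum_congr rfl hz]
    simp
  obtain ⟨hr1, hpB⟩ := Nat.find_spec hex
  have hrspec := rank_spec p hex
  set r := Nat.find hex with hrdef
  by_cases hrd : r ∣ d
  swap
  · have hz : ∀ S ∈ P.powerset.filter (fun S => Even S.card), F S = 0 := by
      intro S hS
      have hS' := (Finset.mem_filter.mp hS).1
      refine Nat.factorization_eq_zero_of_not_dvd (fun hdvd => hrd ?_)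
      exact dvd_trans ((hrspec _).mp hdvd) (hmdvd S hS')
    rw [Finset.sum_congr rfl hz]
    simp
  have hrltd : r < d := by
    rcases Nat.lt_or_ge r d with h | h
    · exact h
    · exfalso
      have heq : r = d := le_antisymm (Nat.le_of_dvd (by omega) hrd) h
      obtain ⟨e, he1, he2, he3⟩ := hnp p hp (heq ▸ hpB)
      have := Nat.le_of_dvd (by omega) ((hrspec e).mp he3)
      omega
  set v := (B r).factorization p with hv
  set Q := P.filter (fun q => q ∣ d / r) with hQ
  have hQP : Q ⊆ P := Finset.filter_subset _ _
  have hdr2 : 2 ≤ d / r := by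
    have h1 : r * (d / r) = d := Nat.mul_div_cancel' hrd
    have hq1 : 1 ≤ d / r := Nat.div_pos (Nat.le_of_lt hrltd) hr1
    have hne : d / r ≠ 1 := fun h => by rw [h, mul_one] at h1; omega
    omega
  have hQne : Q.Nonempty := by
    obtain ⟨q, hq1, hq2⟩ := Nat.exists_prime_and_dvd (n := d / r) (by omega)
    refine ⟨q, Finset.mem_filter.mpr ⟨?_, hq2⟩⟩
    exact Nat.mem_primeFactors.mpr ⟨hq1, dvd_trans hq2 (Nat.div_dvd_of_dvd hrd), hd0⟩
  have hiff : ∀ S ∈ P.powerset, (r ∣ d / ∏ q ∈ S, q ↔ S ∈ Q.powerset) := by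
    intro S hS
    have hSP := Finset.mem_powerset.mp hS
    have h1 : r ∣ d / ∏ q ∈ S, q ↔ (∏ q ∈ S, q) * r ∣ d :=
      Nat.dvd_div_iff_mul_dvd (hπdvd S hS)
    have h2 : (∏ q ∈ S, q) ∣ d / r ↔ r * (∏ q ∈ S, q) ∣ d :=
      Nat.dvd_div_iff_mul_dvd hrd
    rw [h1, Finset.mem_powerset]
    constructor
    · intro h
      intro q hq
      rw [hQ, Finset.mem_filter]
      refine ⟨hSP hq, ?_⟩
      refine dvd_trans (Finset.dvd_prod_of_mem _ hq) (h2.mpr ?_)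
      rwa [mul_comm]
    · intro h
      rw [mul_comm, ← h2]
      refine Finset.prod_primes_dvd _ (fun q hq => (Nat.prime_of_mem_primeFactors (hSP hq)).prime)
        (fun q hq => (Finset.mem_filter.mp (h hq)).2)
  have hFzero : ∀ S ∈ P.powerset, S ∉ Q.powerset → F S = 0 := by
    intro S hS hnQ
    refine Nat.factorization_eq_zero_of_not_dvd (fun hdvd => hnQ ?_)
    exact (hiff S hS).mp ((hrspec _).mp hdvd)
  have hFval : ∀ S ∈ Q.powerset, F S = v + ((d / r) / ∏ q ∈ S, q).factorization p := by
    intro S hS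
    have hSP : S ∈ P.powerset := Finset.mem_powerset.mpr
      (le_trans (Finset.mem_powerset.mp hS) hQP)
    have hrm : r ∣ d / ∏ q ∈ S, q := (hiff S hSP).mpr hS
    have hm' : (d / ∏ q ∈ S, q) / r = (d / r) / ∏ q ∈ S, q := by
      rw [Nat.div_div_eq_div_mul, Nat.div_div_eq_div_mul, mul_comm]
    have h1 : d / ∏ q ∈ S, q = r * ((d / ∏ q ∈ S, q) / r) := (Nat.mul_div_cancel' hrm).symm
    have hpos : 1 ≤ (d / ∏ q ∈ S, q) / r := by
      have := hmpos S hSP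
      rcases Nat.eq_zero_or_pos ((d / ∏ q ∈ S, q) / r) with h0 | h
      · rw [h0, Nat.mul_zero] at h1; omega
      · exact h
    show (B (d / ∏ q ∈ S, q)).factorization p = _
    rw [h1, val_B_lte hp hr1 hpB _ hpos, hm']
  have hQprimes : ∀ q ∈ Q, Nat.Prime q := fun q hq =>
    Nat.prime_of_mem_primeFactors (hQP hq)
  have hππ : ∀ S ∈ Q.powerset, (∏ q ∈ S, q) ∣ d / r := by
    intro S hS
    have hSQ := Finset.mem_powerset.mp hS
    exact Finset.prod_primes_dvd _ (fun q hq => (hQprimes q (hSQ hq)).prime)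
      (fun q hq => (Finset.mem_filter.mp (hSQ hq)).2)
  -- the integer computation
  have hsplit : ∑ S ∈ P.powerset, (-1 : ℤ) ^ S.card * F S
      = (∑ S ∈ P.powerset.filter (fun S => Even S.card), (F S : ℤ))
        - ∑ S ∈ P.powerset.filter (fun S => ¬ Even S.card), (F S : ℤ) := by
    rw [← Finset.sum_filter_add_sum_filter_not P.powerset (fun S => Even S.card)
      (fun S => (-1 : ℤ) ^ S.card * F S)]
    have h1 : ∑ S ∈ P.powerset.filter (fun S => Even S.card), (-1:ℤ)^S.card * F S
        = ∑ S ∈ P.powerset.filter (fun S => Even S.card), (F S : ℤ) :=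
      Finset.sum_congr rfl (fun S hS => by
        rw [((Finset.mem_filter.mp hS).2).neg_one_pow, one_mul])
    have h2 : ∑ S ∈ P.powerset.filter (fun S => ¬ Even S.card), (-1:ℤ)^S.card * F S
        = ∑ S ∈ P.powerset.filter (fun S => ¬ Even S.card), -(F S : ℤ) :=
      Finset.sum_congr rfl (fun S hS => by
        rw [(Nat.not_even_iff_odd.mp (Finset.mem_filter.mp hS).2).neg_one_pow]; ring)
    rw [h1, h2, Finset.sum_neg_distrib]
    ring
  have hsub : ∑ S ∈ P.powerset, (-1 : ℤ) ^ S.card * F S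
      = ∑ S ∈ Q.powerset, (-1 : ℤ) ^ S.card * F S := by
    refine (Finset.sum_subset (Finset.powerset_mono.mpr hQP) ?_).symm
    intro S hS hnS
    rw [hFzero S hS hnS]
    ring
  have hQsum : ∑ S ∈ Q.powerset, (-1 : ℤ) ^ S.card * F S ≤ (d.factorization p : ℤ) := by
    have hrw : ∀ S ∈ Q.powerset, ((-1:ℤ)^S.card * F S)
        = (-1:ℤ)^S.card * (v : ℤ)
          + (-1:ℤ)^S.card * (((d / r) / ∏ q ∈ S, q).factorization p : ℤ) := by
      intro S hS
      rw [hFval S hS]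
      push_cast
      ring
    rw [Finset.sum_congr rfl hrw, Finset.sum_add_distrib, ← Finset.sum_mul,
      Finset.sum_powerset_neg_one_pow_card_of_nonempty hQne, zero_mul, zero_add]
    by_cases hpd : p ∣ d / r
    · set W := (d / r).factorization p with hWdef
      have hwS : ∀ S ∈ Q.powerset,
          ((-1:ℤ)^S.card * (((d / r) / ∏ q ∈ S, q).factorization p : ℤ))
            = (-1:ℤ)^S.card * (W : ℤ) - (-1:ℤ)^S.card * (if p ∈ S then 1 else 0) := by
        intro S hS
        have hSQ := Finset.mem_powerset.mp hS
        have hveq : (((d / r) / ∏ q ∈ S, q).factorization) p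
            = W - ((∏ q ∈ S, q).factorization) p := by
          rw [Nat.factorization_div (hππ S hS), Finsupp.tsub_apply]
        rw [hveq, prime_prod_fact (fun q hq => hQprimes q (hSQ hq)) p]
        by_cases hpS : p ∈ S
        · have hped : 1 ≤ W := by
            have hpdr : p ∣ d / r := dvd_trans (Finset.dvd_prod_of_mem _ hpS) (hππ S hS)
            have hdr0 : d / r ≠ 0 := by omega
            have := (Nat.Prime.pow_dvd_iff_le_factorization hp hdr0 (k := 1)).mp
              (by simpa using hpdr)
            omega
          simp only [hpS, if_true]
          rw [Nat.cast_sub hped]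
          ring
        · simp [hpS]
      rw [Finset.sum_congr rfl hwS, Finset.sum_sub_distrib, ← Finset.sum_mul,
        Finset.sum_powerset_neg_one_pow_card_of_nonempty hQne, zero_mul, zero_sub]
      by_cases hpQ : p ∈ Q
      · have hpd' : (1 : ℤ) ≤ (d.factorization p : ℤ) := by
          have hpdd : p ∣ d := dvd_trans (Finset.mem_filter.mp hpQ).2 (Nat.div_dvd_of_dvd hrd)
          have := (Nat.Prime.pow_dvd_iff_le_factorization hp hd0 (k := 1)).mp
            (by simpa using hpdd)
          exact_mod_cast this
        have hQ' : Q = insert p (Q.erase p) := (Finset.insert_erase hpQ).symm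
        rw [hQ', Finset.sum_powerset_insert (Finset.notMem_erase p Q)]
        have h1 : ∀ T ∈ (Q.erase p).powerset, (-1:ℤ)^T.card * (if p ∈ T then 1 else 0) = 0 := by
          intro T hT
          have : p ∉ T := fun hc => Finset.notMem_erase p Q (Finset.mem_powerset.mp hT hc)
          simp [this]
        have h2 : ∀ T ∈ (Q.erase p).powerset,
            (-1:ℤ)^(insert p T).card * (if p ∈ insert p T then 1 else 0)
              = -((-1:ℤ)^T.card) := by
          intro T hT
          have hpT : p ∉ T := fun hc => Finset.notMem_erase p Q (Finset.mem_powerset.mp hT hc)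
          rw [Finset.card_insert_of_notMem hpT, if_pos (Finset.mem_insert_self p T), pow_succ]
          ring
        rw [Finset.sum_congr rfl h1, Finset.sum_congr rfl h2, Finset.sum_const_zero, zero_add,
          Finset.sum_neg_distrib, Finset.sum_powerset_neg_one_pow_card]
        split_ifs
        · simpa using hpd'
        · simp
      · have hz : ∀ S ∈ Q.powerset, (-1:ℤ)^S.card * (if p ∈ S then 1 else 0) = 0 := by
          intro S hS
          have : p ∉ S := fun hc => hpQ (Finset.mem_powerset.mp hS hc)
          simp [this]
        rw [Finset.sum_congr rfl hz, Finset.sum_const_zero, neg_zero]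
        positivity
    · have hz : ∀ S ∈ Q.powerset,
          ((-1:ℤ)^S.card) * (((d / r) / ∏ q ∈ S, q).factorization p : ℤ) = 0 := by
        intro S hS
        have hdvd : ((d / r) / ∏ q ∈ S, q) ∣ d / r := Nat.div_dvd_of_dvd (hππ S hS)
        have hnd : ¬ p ∣ ((d / r) / ∏ q ∈ S, q) := fun hc => hpd (dvd_trans hc hdvd)
        rw [Nat.factorization_eq_zero_of_not_dvd hnd]
        ring
      rw [Finset.sum_congr rfl hz, Finset.sum_const_zero]
      positivity
  have hle : (∑ S ∈ P.powerset.filter (fun S => Even S.card), (F S : ℤ))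
      - ∑ S ∈ P.powerset.filter (fun S => ¬ Even S.card), (F S : ℤ)
      ≤ (d.factorization p : ℤ) := by
    rw [← hsplit, hsub]
    exact hQsum
  have hc1 : ((∑ S ∈ P.powerset.filter (fun S => Even S.card), F S : ℕ) : ℤ)
      = ∑ S ∈ P.powerset.filter (fun S => Even S.card), (F S : ℤ) := by push_cast; rfl
  have hc2 : ((∑ S ∈ P.powerset.filter (fun S => ¬ Even S.card), F S : ℕ) : ℤ)
      = ∑ S ∈ P.powerset.filter (fun S => ¬ Even S.card), (F S : ℤ) := by push_cast; rfl
  rw [← hc1, ← hc2] at hle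
  omega
-- Part 4 : analytic inequality
lemma B_rec (n : ℕ) : B (n+2) + B n = 6 * B (n+1) := by
  have h1 : B (n+2) = C (n+1) + 3 * B (n+1) := B_step (n+1)
  have h2 := C_step n
  have h3 := B_step n
  omega

lemma sqrt2_sq : Real.sqrt 2 ^ 2 = 2 := Real.sq_sqrt (by norm_num)

lemma sqrt2_lb : (1.414:ℝ) ≤ Real.sqrt 2 := by
  nlinarith [sqrt2_sq, Real.sqrt_nonneg 2]

lemma sqrt2_ub : Real.sqrt 2 ≤ 1.415 := by
  nlinarith [sqrt2_sq, Real.sqrt_nonneg 2]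

lemma B_real : ∀ m : ℕ, 4 * Real.sqrt 2 * (B m : ℝ)
    = (3 + 2*Real.sqrt 2)^m - (3 - 2*Real.sqrt 2)^m := by
  have key : ∀ (x : ℝ), x^2 = 6*x - 1 → ∀ n : ℕ, x^(n+2) = 6*x^(n+1) - x^n := by
    intro x hx n
    have h1 : x^(n+2) = x^n * x^2 := by ring
    rw [h1, hx]; ring
  have ha : (3 + 2*Real.sqrt 2)^2 = 6*(3 + 2*Real.sqrt 2) - 1 := by
    nlinarith [sqrt2_sq]
  have hb : (3 - 2*Real.sqrt 2)^2 = 6*(3 - 2*Real.sqrt 2) - 1 := by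
    nlinarith [sqrt2_sq]
  intro m
  induction m using Nat.twoStepInduction with
  | zero => simp [B]
  | one =>
    show 4 * Real.sqrt 2 * ((B 1 : ℕ) : ℝ) = _
    simp [B]; ring
  | more n ih1 ih2 =>
    have hrec : ((B (n+2) : ℕ) : ℝ) = 6 * (B (n+1) : ℝ) - (B n : ℝ) := by
      have := B_rec n
      have h5 : ((B (n+2) + B n : ℕ) : ℝ) = ((6 * B (n+1) : ℕ) : ℝ) := by rw [this]
      push_cast at h5
      linarith
    rw [hrec, key _ ha n, key _ hb n]
    ring_nf
    ring_nf at ih1 ih2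
    linarith

lemma one_sub_sum_le_prod {ι : Type*} (t : Finset ι) (f : ι → ℝ)
    (h0 : ∀ i ∈ t, 0 ≤ f i) (h1 : ∀ i ∈ t, f i ≤ 1) :
    1 - ∑ i ∈ t, f i ≤ ∏ i ∈ t, (1 - f i) := by
  induction t using Finset.cons_induction with
  | empty => simp
  | cons a t ha ih =>
    rw [Finset.prod_cons, Finset.sum_cons]
    have h0a : 0 ≤ f a := h0 a (Finset.mem_cons_self a t)
    have h1a : f a ≤ 1 := h1 a (Finset.mem_cons_self a t)
    have ih' := ih (fun i hi => h0 i (Finset.mem_cons_of_mem hi))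
      (fun i hi => h1 i (Finset.mem_cons_of_mem hi))
    have hp0 : (0:ℝ) ≤ ∏ i ∈ t, (1 - f i) :=
      Finset.prod_nonneg (fun i hi => by have := h1 i (Finset.mem_cons_of_mem hi); linarith)
    have hp1 : ∏ i ∈ t, (1 - f i) ≤ 1 :=
      Finset.prod_le_one
        (fun i hi => by have := h1 i (Finset.mem_cons_of_mem hi); linarith)
        (fun i hi => by have := h0 i (Finset.mem_cons_of_mem hi); linarith)
    nlinarith

lemma geom33 (N : ℕ) : ∑ j ∈ Finset.Icc 1 N, ((1:ℝ)/33)^j = (1 - (1/33)^N)/32 := by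
  induction N with
  | zero => simp
  | succ N ih =>
    rw [Finset.sum_Icc_succ_top (by omega), ih, pow_succ]
    ring

lemma pow29 : ∀ D : ℕ, 1 ≤ D → (64:ℝ) * D^2 < 31 * (29/5)^D := by
  intro D
  induction D with
  | zero => omega
  | succ D ih =>
    intro _
    rcases Nat.eq_zero_or_pos D with rfl | hD
    · norm_num
    · have h := ih hD
      have hD1 : (1:ℝ) ≤ (D:ℝ) := by exact_mod_cast hD
      have hstep : (31:ℝ) * (29/5)^(D+1) = (29/5) * (31 * (29/5)^D) := by ring
      rw [hstep]
      push_cast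
      nlinarith [h, hD1]
-- Part 5: combinatorial identities
def Dd (d : ℕ) : ℕ := ∏ p ∈ d.primeFactors, p ^ (d.factorization p - 1) * (p - 1)

lemma Dd_pos (d : ℕ) : 1 ≤ Dd d := by
  refine Nat.one_le_iff_ne_zero.mpr (Finset.prod_ne_zero_iff.mpr (fun p hp => ?_))
  have hpp := Nat.prime_of_mem_primeFactors hp
  have h1 : 1 ≤ p ^ (d.factorization p - 1) := Nat.one_le_pow _ _ hpp.pos
  have h2 := hpp.two_le
  exact Nat.mul_ne_zero (by omega) (by omega)

lemma alt_split {R : Type*} [CommRing R] (X : Finset (Finset ℕ)) (f : Finset ℕ → R) :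
    ∑ S ∈ X, (-1:R)^S.card * f S
      = (∑ S ∈ X.filter (fun S => Even S.card), f S)
        - ∑ S ∈ X.filter (fun S => ¬ Even S.card), f S := by
  rw [← Finset.sum_filter_add_sum_filter_not X (fun S => Even S.card)
    (fun S => (-1:R)^S.card * f S)]
  have h1 : ∑ S ∈ X.filter (fun S => Even S.card), (-1:R)^S.card * f S
      = ∑ S ∈ X.filter (fun S => Even S.card), f S :=
    Finset.sum_congr rfl (fun S hS => by
      rw [((Finset.mem_filter.mp hS).2).neg_one_pow, one_mul])
  have h2 : ∑ S ∈ X.filter (fun S => ¬ Even S.card), (-1:R)^S.card * f S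
      = ∑ S ∈ X.filter (fun S => ¬ Even S.card), -(f S) :=
    Finset.sum_congr rfl (fun S hS => by
      rw [(Nat.not_even_iff_odd.mp (Finset.mem_filter.mp hS).2).neg_one_pow]; ring)
  rw [h1, h2, Finset.sum_neg_distrib]
  ring

lemma card_parity (P : Finset ℕ) (hne : P.Nonempty) :
    (P.powerset.filter (fun S => Even S.card)).card
      = (P.powerset.filter (fun S => ¬ Even S.card)).card := by
  have h := Finset.sum_powerset_neg_one_pow_card_of_nonempty hne
  have h2 := alt_split (R := ℤ) P.powerset (fun _ => 1)
  simp only [mul_one] at h2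
  rw [h] at h2
  simp only [Finset.sum_const, nsmul_eq_mul, mul_one] at h2
  have h3 : ((P.powerset.filter (fun S => Even S.card)).card : ℤ)
      = ((P.powerset.filter (fun S => ¬ Even S.card)).card : ℤ) := by linarith
  exact_mod_cast h3

lemma d_eq_prod {d : ℕ} (hd0 : d ≠ 0) :
    d = ∏ p ∈ d.primeFactors, p ^ (d.factorization p) := by
  nth_rewrite 1 [← Nat.factorization_prod_pow_eq_self hd0]
  rw [Finsupp.prod, Nat.support_factorization]

lemma sum_m_eq (d : ℕ) (hd : 2 ≤ d) :
    ∑ S ∈ d.primeFactors.powerset.filter (fun S => Even S.card), (d / ∏ q ∈ S, q)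
      = (∑ S ∈ d.primeFactors.powerset.filter (fun S => ¬Even S.card), (d / ∏ q ∈ S, q))
        + Dd d := by
  have hd0 : d ≠ 0 := by omega
  set P := d.primeFactors with hP
  have hπdvd : ∀ S ∈ P.powerset, (∏ q ∈ S, q) ∣ d := by
    intro S hS
    rw [Finset.mem_powerset] at hS
    exact Finset.prod_primes_dvd d (fun q hq => (Nat.prime_of_mem_primeFactors (hS hq)).prime)
      (fun q hq => Nat.dvd_of_mem_primeFactors (hS hq))
  have hπne : ∀ S ∈ P.powerset, ((∏ q ∈ S, q : ℕ) : ℚ) ≠ 0 := by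
    intro S hS
    rw [Finset.mem_powerset] at hS
    have : 0 < ∏ q ∈ S, q := Finset.prod_pos
      (fun q hq => (Nat.prime_of_mem_primeFactors (hS hq)).pos)
    exact_mod_cast this.ne'
  have key : ∑ S ∈ P.powerset, (-1:ℚ)^S.card * ((d / ∏ q ∈ S, q : ℕ) : ℚ) = (Dd d : ℚ) := by
    have hterm : ∀ S ∈ P.powerset, (-1:ℚ)^S.card * ((d / ∏ q ∈ S, q : ℕ) : ℚ)
        = (d:ℚ) * ((∏ q ∈ S, (-(q:ℚ)⁻¹)) * ∏ q ∈ P \ S, (1:ℚ)) := by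
      intro S hS
      rw [Nat.cast_div (hπdvd S hS) (hπne S hS)]
      rw [Finset.prod_const_one, mul_one]
      have : ∏ q ∈ S, (-(q:ℚ)⁻¹) = (-1:ℚ)^S.card * (∏ q ∈ S, (q:ℚ))⁻¹ := by
        have e1 : ∏ q ∈ S, (-(q:ℚ)⁻¹) = ∏ q ∈ S, ((-1) * (q:ℚ)⁻¹) :=
          Finset.prod_congr rfl (fun q _ => by ring)
        rw [e1, Finset.prod_mul_distrib, Finset.prod_const, Finset.prod_inv_distrib]
      rw [this, ← Nat.cast_prod]
      ring
    rw [Finset.sum_congr rfl hterm, ← Finset.mul_sum]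
    rw [← Finset.prod_add (fun q : ℕ => -(q:ℚ)⁻¹) (fun _ : ℕ => (1:ℚ)) P]
    -- now : (d:ℚ) * ∏ q ∈ P, (-(q:ℚ)⁻¹ + 1) = Dd d
    have hdp : (d:ℚ) = ∏ p ∈ P, ((p:ℚ)) ^ (d.factorization p) := by
      conv_lhs => rw [d_eq_prod hd0]
      push_cast
      rfl
    rw [hdp, ← Finset.prod_mul_distrib]
    have hfac : ∀ p ∈ P, (p:ℚ) ^ (d.factorization p) * (-(p:ℚ)⁻¹ + 1)
        = ((p ^ (d.factorization p - 1) * (p - 1) : ℕ) : ℚ) := by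
      intro p hp
      have hpp : p.Prime := Nat.prime_of_mem_primeFactors hp
      have hpne : (p:ℚ) ≠ 0 := by exact_mod_cast hpp.pos.ne'
      have ha : 1 ≤ d.factorization p :=
        hpp.factorization_pos_of_dvd hd0 (Nat.dvd_of_mem_primeFactors hp)
      have hsplit : (d.factorization p - 1) + 1 = d.factorization p := by omega
      have hps : (p:ℚ) ^ (d.factorization p) = (p:ℚ) ^ (d.factorization p - 1) * p := by
        conv_lhs => rw [← hsplit, pow_succ]
      rw [hps]
      push_cast [Nat.cast_sub hpp.one_le]
      field_simp
      ring
    rw [Finset.prod_congr rfl hfac, ← Nat.cast_prod]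
    rfl
  have hsplit2 := alt_split (R := ℚ) P.powerset (fun S => ((d / ∏ q ∈ S, q : ℕ) : ℚ))
  rw [key] at hsplit2
  have hc1 : ((∑ S ∈ P.powerset.filter (fun S => Even S.card), (d / ∏ q ∈ S, q) : ℕ) : ℚ)
      = ∑ S ∈ P.powerset.filter (fun S => Even S.card), ((d / ∏ q ∈ S, q : ℕ) : ℚ) := by
    push_cast; rfl
  have hc2 : ((∑ S ∈ P.powerset.filter (fun S => ¬ Even S.card), (d / ∏ q ∈ S, q) : ℕ) : ℚ)
      = ∑ S ∈ P.powerset.filter (fun S => ¬ Even S.card), ((d / ∏ q ∈ S, q : ℕ) : ℚ) := by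
    push_cast; rfl
  have : ((∑ S ∈ P.powerset.filter (fun S => Even S.card), (d / ∏ q ∈ S, q) : ℕ) : ℚ)
      = (((∑ S ∈ P.powerset.filter (fun S => ¬ Even S.card), (d / ∏ q ∈ S, q)) + Dd d : ℕ) : ℚ) := by
    push_cast
    rw [hc1, hc2] at *
    linarith [hsplit2]
  exact_mod_cast this

lemma d_le_Dd (d : ℕ) (hd : 2 ≤ d) : d ≤ 2 * Dd d ^ 2 := by
  have hd0 : d ≠ 0 := by omega
  set P := d.primeFactors with hP
  have hprime : ∀ p ∈ P, Nat.Prime p := fun p hp => Nat.prime_of_mem_primeFactors hp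
  have hfa : ∀ p ∈ P, 1 ≤ d.factorization p := fun p hp =>
    (hprime p hp).factorization_pos_of_dvd hd0 (Nat.dvd_of_mem_primeFactors hp)
  have h1 : d ≤ 2 ^ P.card * Dd d := by
    conv_lhs => rw [d_eq_prod hd0]
    have hle : ∀ p ∈ P, p ^ (d.factorization p) ≤ 2 * (p ^ (d.factorization p - 1) * (p - 1)) := by
      intro p hp
      have h2 := (hprime p hp).two_le
      have h4 := hfa p hp
      have hsplit : (d.factorization p - 1) + 1 = d.factorization p := by omega
      calc p ^ (d.factorization p) = p ^ (d.factorization p - 1) * p := by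
            conv_lhs => rw [← hsplit, pow_succ]
        _ ≤ p ^ (d.factorization p - 1) * (2 * (p - 1)) := by
            have h3 : p ≤ 2 * (p - 1) := by omega
            exact Nat.mul_le_mul le_rfl h3
        _ = 2 * (p ^ (d.factorization p - 1) * (p - 1)) := by ring
    calc ∏ p ∈ P, p ^ (d.factorization p)
        ≤ ∏ p ∈ P, 2 * (p ^ (d.factorization p - 1) * (p - 1)) :=
          Finset.prod_le_prod (fun _ _ => Nat.zero_le _) hle
      _ = 2 ^ P.card * Dd d := by
          rw [Finset.prod_mul_distrib, Finset.prod_const]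
          rfl
  have h2 : 2 ^ P.card ≤ 2 * Dd d := by
    have hDd1 : ∏ p ∈ P, (p - 1) ≤ Dd d :=
      Finset.prod_le_prod (fun _ _ => Nat.zero_le _)
        (fun p hp => by
          have : 1 ≤ p ^ (d.factorization p - 1) := Nat.one_le_pow _ _ (hprime p hp).pos
          calc p - 1 = 1 * (p - 1) := (one_mul _).symm
            _ ≤ p ^ (d.factorization p - 1) * (p - 1) := Nat.mul_le_mul this le_rfl)
    have hsub : ∏ p ∈ P.erase 2, (p - 1) ≤ ∏ p ∈ P, (p - 1) :=
      Finset.prod_le_prod_of_subset_of_one_le' (Finset.erase_subset _ _)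
        (fun p hp _ => by have := (hprime p hp).two_le; omega)
    have hod : 2 ^ (P.erase 2).card ≤ ∏ p ∈ P.erase 2, (p - 1) := by
      rw [← Finset.prod_const]
      refine Finset.prod_le_prod (fun _ _ => Nat.zero_le _) (fun p hp => ?_)
      have hpP := Finset.mem_of_mem_erase hp
      have hne2 := Finset.ne_of_mem_erase hp
      have := (hprime p hpP).two_le
      have : 2 < p := lt_of_le_of_ne this (Ne.symm hne2)
      omega
    have hcard : P.card - 1 ≤ (P.erase 2).card := Finset.pred_card_le_card_erase
    have h2k : 2 ^ P.card ≤ 2 * 2 ^ (P.card - 1) := by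
      rcases Nat.eq_zero_or_pos P.card with h | h
      · rw [h]; simp
      · have hc : P.card = (P.card - 1) + 1 := by omega
        conv_lhs => rw [hc, pow_succ]
        omega
    calc 2 ^ P.card ≤ 2 * 2 ^ (P.card - 1) := h2k
      _ ≤ 2 * 2 ^ (P.erase 2).card :=
          Nat.mul_le_mul le_rfl (Nat.pow_le_pow_right (by norm_num) hcard)
      _ ≤ 2 * ∏ p ∈ P.erase 2, (p - 1) := Nat.mul_le_mul le_rfl hod
      _ ≤ 2 * ∏ p ∈ P, (p - 1) := Nat.mul_le_mul le_rfl hsub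
      _ ≤ 2 * Dd d := Nat.mul_le_mul le_rfl hDd1
  calc d ≤ 2 ^ P.card * Dd d := h1
    _ ≤ (2 * Dd d) * Dd d := Nat.mul_le_mul_right _ h2
    _ = 2 * Dd d ^ 2 := by ring
-- Part 6 : the analytic inequality
open Finset in
lemma key_lt (d : ℕ) (hd : 2 ≤ d) :
    d * ∏ S ∈ d.primeFactors.powerset.filter (fun S => ¬ Even S.card), B (d / ∏ q ∈ S, q)
      < ∏ S ∈ d.primeFactors.powerset.filter (fun S => Even S.card), B (d / ∏ q ∈ S, q) := by
  have hd0 : d ≠ 0 := by omega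
  set P := d.primeFactors with hP
  have hPne : P.Nonempty := Nat.nonempty_primeFactors.mpr (by omega)
  have hπdvd : ∀ S ∈ P.powerset, (∏ q ∈ S, q) ∣ d := by
    intro S hS
    rw [Finset.mem_powerset] at hS
    exact Finset.prod_primes_dvd d (fun q hq => (Nat.prime_of_mem_primeFactors (hS hq)).prime)
      (fun q hq => Nat.dvd_of_mem_primeFactors (hS hq))
  have hπpos : ∀ S : Finset ℕ, S ∈ P.powerset → 0 < ∏ q ∈ S, q := by
    intro S hS
    rw [Finset.mem_powerset] at hS
    exact Finset.prod_pos (fun q hq => (Nat.prime_of_mem_primeFactors (hS hq)).pos)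
  have hmpos : ∀ S ∈ P.powerset, 1 ≤ d / ∏ q ∈ S, q := fun S hS =>
    Nat.div_pos (Nat.le_of_dvd (by omega) (hπdvd S hS)) (hπpos S hS)
  have hmdvd : ∀ S ∈ P.powerset, (d / ∏ q ∈ S, q) ∣ d := fun S hS =>
    Nat.div_dvd_of_dvd (hπdvd S hS)
  -- real numbers
  have hs1 : (1.414:ℝ) ≤ Real.sqrt 2 := sqrt2_lb
  have hs2 : Real.sqrt 2 ≤ 1.415 := sqrt2_ub
  set s : ℝ := Real.sqrt 2 with hsdef
  have hs0 : 0 < s := by linarith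
  set a : ℝ := 3 + 2*s with hadef
  set b : ℝ := 3 - 2*s with hbdef
  have ha0 : 0 < a := by simp only [hadef]; linarith
  have hb0 : 0 < b := by simp only [hbdef]; linarith
  have hba : a * b = 1 := by
    simp only [hadef, hbdef]
    nlinarith [sqrt2_sq]
  have ha29 : (29:ℝ)/5 ≤ a := by simp only [hadef]; linarith
  have hblt : b^2 ≤ 1/33 := by
    simp only [hbdef]
    nlinarith [hs1, hs2]
  have hb2nonneg : (0:ℝ) ≤ b^2 := sq_nonneg b
  have hbval : ∀ m : ℕ, ((B m : ℕ):ℝ) = (a^m - b^m) * (4*s)⁻¹ := by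
    intro m
    have := B_real m
    rw [← hsdef, ← hadef, ← hbdef] at this
    field_simp
    linarith
  have hblta : b < a := by simp only [hadef, hbdef]; linarith
  have hNpos : ∀ m : ℕ, 1 ≤ m → 0 < a^m - b^m := by
    intro m hm
    have := pow_lt_pow_left₀ hblta (le_of_lt hb0) (by omega : m ≠ 0)
    linarith
  have hNfac : ∀ m : ℕ, a^m - b^m = a^m * (1 - (b^2)^m) := by
    intro m
    have hab2 : a * b^2 = b := by
      calc a * b^2 = (a*b)*b := by ring
        _ = b := by rw [hba]; ring
    have : b^m = a^m * (b^2)^m := by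
      rw [← mul_pow, hab2]
    rw [this]; ring
  -- notation for the two index sets
  set evens := P.powerset.filter (fun S => Even S.card) with hevens
  set odds := P.powerset.filter (fun S => ¬ Even S.card) with hodds
  have hesub : evens ⊆ P.powerset := Finset.filter_subset _ _
  have hosub : odds ⊆ P.powerset := Finset.filter_subset _ _
  have hcard : evens.card = odds.card := card_parity P hPne
  have hsum : (∑ S ∈ evens, (d / ∏ q ∈ S, q))
      = (∑ S ∈ odds, (d / ∏ q ∈ S, q)) + Dd d := sum_m_eq d hd
  -- products over evens and odds in ℝ
  have hprod : ∀ X : Finset (Finset ℕ), X ⊆ P.powerset →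
      ((∏ S ∈ X, B (d / ∏ q ∈ S, q) : ℕ) : ℝ)
        = (∏ S ∈ X, (a^(d / ∏ q ∈ S, q) - b^(d / ∏ q ∈ S, q))) * ((4*s)⁻¹)^X.card := by
    intro X hX
    rw [Nat.cast_prod]
    rw [Finset.prod_congr rfl (fun S _ => hbval (d / ∏ q ∈ S, q))]
    rw [Finset.prod_mul_distrib, Finset.prod_const]
  -- upper bound for odds
  have h_up : (∏ S ∈ odds, (a^(d / ∏ q ∈ S, q) - b^(d / ∏ q ∈ S, q)))
      ≤ a ^ (∑ S ∈ odds, (d / ∏ q ∈ S, q)) := by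
    rw [← Finset.prod_pow_eq_pow_sum]
    refine Finset.prod_le_prod (fun S hS => le_of_lt (hNpos _ (hmpos S (hosub hS)))) ?_
    intro S hS
    have : 0 < b ^ (d / ∏ q ∈ S, q) := pow_pos hb0 _
    linarith
  -- sum of (b²)^m over evens is at most 1/32
  have hinj : ∀ S ∈ evens, ∀ T ∈ evens,
      d / ∏ q ∈ S, q = d / ∏ q ∈ T, q → S = T := by
    intro S hS T hT hm
    have hSP := Finset.mem_powerset.mp (hesub hS)
    have hTP := Finset.mem_powerset.mp (hesub hT)
    have hπ : ∏ q ∈ S, q = ∏ q ∈ T, q := by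
      have e1 : d / (d / ∏ q ∈ S, q) = ∏ q ∈ S, q :=
        Nat.div_div_self (hπdvd S (hesub hS)) hd0
      have e2 : d / (d / ∏ q ∈ T, q) = ∏ q ∈ T, q :=
        Nat.div_div_self (hπdvd T (hesub hT)) hd0
      rw [← e1, ← e2, hm]
    have hSp : ∀ q ∈ S, Nat.Prime q := fun q hq => Nat.prime_of_mem_primeFactors (hSP hq)
    have hTp : ∀ q ∈ T, Nat.Prime q := fun q hq => Nat.prime_of_mem_primeFactors (hTP hq)
    rw [← Nat.primeFactors_prod hSp, ← Nat.primeFactors_prod hTp, hπ]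
  have hsumf : (∑ S ∈ evens, ((b^2))^(d / ∏ q ∈ S, q)) ≤ 1/32 := by
    have step1 : (∑ S ∈ evens, ((b^2))^(d / ∏ q ∈ S, q))
        ≤ ∑ S ∈ evens, ((1:ℝ)/33)^(d / ∏ q ∈ S, q) := by
      refine Finset.sum_le_sum (fun S hS => ?_)
      exact pow_le_pow_left₀ hb2nonneg hblt _
    have step2 : ∑ S ∈ evens, ((1:ℝ)/33)^(d / ∏ q ∈ S, q)
        = ∑ j ∈ evens.image (fun S => d / ∏ q ∈ S, q), ((1:ℝ)/33)^j :=
      (Finset.sum_image hinj).symm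
    have step3 : ∑ j ∈ evens.image (fun S => d / ∏ q ∈ S, q), ((1:ℝ)/33)^j
        ≤ ∑ j ∈ Finset.Icc 1 d, ((1:ℝ)/33)^j := by
      refine Finset.sum_le_sum_of_subset_of_nonneg ?_ (fun j _ _ => by positivity)
      intro j hj
      obtain ⟨S, hS, rfl⟩ := Finset.mem_image.mp hj
      refine Finset.mem_Icc.mpr ⟨hmpos S (hesub hS), ?_⟩
      exact Nat.le_of_dvd (by omega) (hmdvd S (hesub hS))
    have step4 : ∑ j ∈ Finset.Icc 1 d, ((1:ℝ)/33)^j ≤ 1/32 := by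
      rw [geom33]
      have : (0:ℝ) ≤ (1/33)^d := by positivity
      linarith
    linarith
  -- lower bound for evens
  have h_low : a ^ (∑ S ∈ evens, (d / ∏ q ∈ S, q)) * (31/32)
      ≤ ∏ S ∈ evens, (a^(d / ∏ q ∈ S, q) - b^(d / ∏ q ∈ S, q)) := by
    have e1 : ∏ S ∈ evens, (a^(d / ∏ q ∈ S, q) - b^(d / ∏ q ∈ S, q))
        = (∏ S ∈ evens, a^(d / ∏ q ∈ S, q))
          * ∏ S ∈ evens, (1 - ((b^2))^(d / ∏ q ∈ S, q)) := by
      rw [← Finset.prod_mul_distrib]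
      exact Finset.prod_congr rfl (fun S _ => hNfac _)
    have e2 : (∏ S ∈ evens, a^(d / ∏ q ∈ S, q))
        = a ^ (∑ S ∈ evens, (d / ∏ q ∈ S, q)) := Finset.prod_pow_eq_pow_sum _ _ _
    have e3 : (31:ℝ)/32 ≤ ∏ S ∈ evens, (1 - ((b^2))^(d / ∏ q ∈ S, q)) := by
      have hW := one_sub_sum_le_prod evens (fun S => ((b^2))^(d / ∏ q ∈ S, q))
        (fun S _ => by positivity)
        (fun S _ => pow_le_one₀ hb2nonneg (le_trans hblt (by norm_num)))
      have := hsumf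
      linarith
    rw [e1, e2]
    have hpow : (0:ℝ) ≤ a ^ (∑ S ∈ evens, (d / ∏ q ∈ S, q)) := le_of_lt (pow_pos ha0 _)
    nlinarith [e3, hpow]
  -- final numeric bound
  have hnum : (d:ℝ) < (31/32) * a^(Dd d) := by
    have h29 := pow29 (Dd d) (Dd_pos d)
    have haD : ((29:ℝ)/5)^(Dd d) ≤ a^(Dd d) := pow_le_pow_left₀ (by norm_num) ha29 _
    have hd2D : (d:ℝ) ≤ 2 * ((Dd d : ℕ):ℝ)^2 := by
      have := d_le_Dd d hd
      have h' : ((d:ℕ):ℝ) ≤ ((2 * Dd d ^ 2 : ℕ):ℝ) := Nat.cast_le.mpr this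
      push_cast at h'
      linarith
    nlinarith [h29, haD, hd2D]
  -- assemble
  rw [← Nat.cast_lt (α := ℝ)]
  push_cast [hprod evens hesub, hprod odds hosub]
  rw [← hcard]
  have hcpos : (0:ℝ) < ((4*s)⁻¹)^evens.card := by positivity
  have main : (d:ℝ) * ∏ S ∈ odds, (a^(d / ∏ q ∈ S, q) - b^(d / ∏ q ∈ S, q))
      < ∏ S ∈ evens, (a^(d / ∏ q ∈ S, q) - b^(d / ∏ q ∈ S, q)) := by
    calc (d:ℝ) * ∏ S ∈ odds, (a^(d / ∏ q ∈ S, q) - b^(d / ∏ q ∈ S, q))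
        ≤ (d:ℝ) * a ^ (∑ S ∈ odds, (d / ∏ q ∈ S, q)) := by
          refine mul_le_mul_of_nonneg_left h_up (Nat.cast_nonneg d)
      _ < ((31/32) * a^(Dd d)) * a ^ (∑ S ∈ odds, (d / ∏ q ∈ S, q)) := by
          exact mul_lt_mul_of_pos_right hnum (pow_pos ha0 _)
      _ = a ^ (∑ S ∈ evens, (d / ∏ q ∈ S, q)) * (31/32) := by
          rw [hsum, pow_add]; ring
      _ ≤ ∏ S ∈ evens, (a^(d / ∏ q ∈ S, q) - b^(d / ∏ q ∈ S, q)) := h_low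
  calc (d:ℝ) * ((∏ S ∈ odds, (a^(d / ∏ q ∈ S, q) - b^(d / ∏ q ∈ S, q))) * ((4*s)⁻¹)^evens.card)
      = ((d:ℝ) * ∏ S ∈ odds, (a^(d / ∏ q ∈ S, q) - b^(d / ∏ q ∈ S, q))) * ((4*s)⁻¹)^evens.card := by
        ring
    _ < (∏ S ∈ evens, (a^(d / ∏ q ∈ S, q) - b^(d / ∏ q ∈ S, q))) * ((4*s)⁻¹)^evens.card :=
        mul_lt_mul_of_pos_right main hcpos
-- Part 7 : primitive divisors and conclusion
open Finset in
lemma exists_primitive (d : ℕ) (hd : 2 ≤ d) :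
    ∃ p, p.Prime ∧ p ∣ B d ∧ ∀ e, 1 ≤ e → e < d → ¬ p ∣ B e := by
  by_contra hcon
  push_neg at hcon
  have hnp : ∀ p, p.Prime → p ∣ B d → ∃ e, 1 ≤ e ∧ e < d ∧ p ∣ B e := by
    intro p hp hpd
    obtain ⟨e, he1, he2, he3⟩ := hcon p hp hpd
    exact ⟨e, he1, he2, he3⟩
  have h1 := key_dvd d hd hnp
  have h2 := key_lt d hd
  have hpos : 0 < d * ∏ S ∈ d.primeFactors.powerset.filter (fun S => ¬ Even S.card),
      B (d / ∏ q ∈ S, q) := by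
    refine Nat.mul_pos (by omega) (Finset.prod_pos (fun S hS => ?_))
    have hSP := (Finset.mem_filter.mp hS).1
    rw [Finset.mem_powerset] at hSP
    refine B_pos (Nat.div_pos (Nat.le_of_dvd (by omega) ?_) ?_)
    · exact Finset.prod_primes_dvd d
        (fun q hq => (Nat.prime_of_mem_primeFactors (hSP hq)).prime)
        (fun q hq => Nat.dvd_of_mem_primeFactors (hSP hq))
    · exact Finset.prod_pos (fun q hq => (Nat.prime_of_mem_primeFactors (hSP hq)).pos)
  have h3 := Nat.le_of_dvd hpos h1
  omega

noncomputable def primOf (d : ℕ) : ℕ :=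
  if h : 2 ≤ d then (exists_primitive d h).choose else 2

lemma primOf_spec {d : ℕ} (h : 2 ≤ d) :
    (primOf d).Prime ∧ primOf d ∣ B d ∧ ∀ e, 1 ≤ e → e < d → ¬ primOf d ∣ B e := by
  rw [primOf, dif_pos h]
  exact (exists_primitive d h).choose_spec

lemma omega_ge (n : ℕ) (hn : 1 ≤ n) :
    n.divisors.card - 1 ≤ (B n).primeFactors.card := by
  have hBn0 : B n ≠ 0 := B_ne_zero hn
  have hmaps : ∀ d ∈ n.divisors.erase 1, primOf d ∈ (B n).primeFactors := by
    intro d hd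
    have hd1 : d ≠ 1 := Finset.ne_of_mem_erase hd
    have hdd := Nat.mem_divisors.mp (Finset.mem_of_mem_erase hd)
    have hd2 : 2 ≤ d := by
      rcases Nat.eq_zero_or_pos d with rfl | h
      · exact absurd (zero_dvd_iff.mp hdd.1) (by omega)
      · omega
    obtain ⟨hp, hpd, _⟩ := primOf_spec hd2
    exact Nat.mem_primeFactors.mpr ⟨hp, dvd_trans hpd (B_dvd hdd.1), hBn0⟩
  have hinj : ∀ d₁ ∈ n.divisors.erase 1, ∀ d₂ ∈ n.divisors.erase 1,
      primOf d₁ = primOf d₂ → d₁ = d₂ := by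
    have key : ∀ d₁ d₂, d₁ ∈ n.divisors.erase 1 → d₂ ∈ n.divisors.erase 1 →
        d₁ < d₂ → primOf d₁ ≠ primOf d₂ := by
      intro d₁ d₂ h1 h2 hlt heq
      have hd1 : 2 ≤ d₁ := by
        have := Finset.ne_of_mem_erase h1
        have hdd := Nat.mem_divisors.mp (Finset.mem_of_mem_erase h1)
        rcases Nat.eq_zero_or_pos d₁ with rfl | h
        · exact absurd (zero_dvd_iff.mp hdd.1) (by omega)
        · omega
      have hd2 : 2 ≤ d₂ := by omega
      obtain ⟨_, hpd1, _⟩ := primOf_spec hd1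
      obtain ⟨_, _, hnd2⟩ := primOf_spec hd2
      exact hnd2 d₁ (by omega) hlt (heq ▸ hpd1)
    intro d₁ h1 d₂ h2 heq
    rcases lt_trichotomy d₁ d₂ with h | h | h
    · exact absurd heq (key d₁ d₂ h1 h2 h)
    · exact h
    · exact absurd heq.symm (key d₂ d₁ h2 h1 h)
  have hcard := Finset.card_le_card_of_injOn primOf hmaps hinj
  have h1 : 1 ∈ n.divisors := Nat.one_mem_divisors.mpr (by omega)
  rw [Finset.card_erase_of_mem h1] at hcard
  exact hcard

lemma tau_ge_pow (m : ℕ) (hm : m ≠ 0) :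
    2 ^ m.primeFactors.card ≤ m.divisors.card := by
  have hmaps : ∀ S ∈ m.primeFactors.powerset, (∏ q ∈ S, q) ∈ m.divisors := by
    intro S hS
    rw [Finset.mem_powerset] at hS
    refine Nat.mem_divisors.mpr ⟨?_, hm⟩
    exact Finset.prod_primes_dvd m
      (fun q hq => (Nat.prime_of_mem_primeFactors (hS hq)).prime)
      (fun q hq => Nat.dvd_of_mem_primeFactors (hS hq))
  have hinj : ∀ S ∈ m.primeFactors.powerset, ∀ T ∈ m.primeFactors.powerset,
      (∏ q ∈ S, q) = (∏ q ∈ T, q) → S = T := by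
    intro S hS T hT heq
    rw [Finset.mem_powerset] at hS hT
    have hSp : ∀ q ∈ S, Nat.Prime q := fun q hq => Nat.prime_of_mem_primeFactors (hS hq)
    have hTp : ∀ q ∈ T, Nat.Prime q := fun q hq => Nat.prime_of_mem_primeFactors (hT hq)
    rw [← Nat.primeFactors_prod hSp, ← Nat.primeFactors_prod hTp, heq]
  have := Finset.card_le_card_of_injOn (fun S => ∏ q ∈ S, q) hmaps hinj
  rwa [Finset.card_powerset] at this

lemma B_le (q : ℕ) (h : 1 ≤ q) : B q ≤ 6 ^ (q - 1) := by
  induction q with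
  | zero => omega
  | succ q ih =>
    rcases Nat.eq_zero_or_pos q with rfl | hq
    · simp [B]
    · have h1 : B (q + 1) ≤ 6 * B q := by
        obtain ⟨n, rfl⟩ : ∃ n, q = n + 1 := ⟨q - 1, by omega⟩
        have h : B (n+1+1) + B n = 6 * B (n+1) := B_rec n
        omega
      have h2 := ih hq
      have h3 : q + 1 - 1 = (q - 1) + 1 := by omega
      rw [h3, pow_succ]
      calc B (q+1) ≤ 6 * B q := h1
        _ ≤ 6 * 6 ^ (q-1) := by omega
        _ = 6 ^ (q-1) * 6 := by ring
lemma pow63 (q : ℕ) (hq : 1 ≤ q) : 6 ^ (q - 1) < 2 ^ (3 * q - 1) := by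
  induction q with
  | zero => omega
  | succ q ih =>
    rcases Nat.eq_zero_or_pos q with rfl | hq'
    · norm_num
    · have h1 := ih hq'
      have h2 : q + 1 - 1 = (q - 1) + 1 := by omega
      have h3 : 3 * (q + 1) - 1 = (3 * q - 1) + 3 := by omega
      rw [h2, h3, pow_succ, pow_add]
      have : (6:ℕ)^(q-1) * 6 < 2^(3*q-1) * 2^3 := by
        calc (6:ℕ)^(q-1) * 6 < 2^(3*q-1) * 6 := by
              have h6 : (0:ℕ) < 6 := by norm_num
              exact (Nat.mul_lt_mul_right h6).mpr h1
          _ ≤ 2^(3*q-1) * 2^3 := Nat.mul_le_mul_left _ (by norm_num)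
      exact this

theorem stmt18 : ∀ n : ℕ, 1 ≤ n → B (n.divisors.card / 3) < (B n).divisors.card := by
  intro n hn
  have hBn0 : B n ≠ 0 := B_ne_zero hn
  have hτ1 : 1 ≤ (B n).divisors.card := by
    have : (B n).divisors.Nonempty := ⟨1, Nat.one_mem_divisors.mpr hBn0⟩
    exact Finset.card_pos.mpr this
  rcases Nat.eq_zero_or_pos (n.divisors.card / 3) with hq | hq
  · rw [hq]
    show B 0 < _
    have : B 0 = 0 := rfl
    omega
  · have h3q : 3 * (n.divisors.card / 3) ≤ n.divisors.card := by
      have := Nat.div_mul_le_self n.divisors.card 3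
      omega
    have homega := omega_ge n hn
    have htau := tau_ge_pow (B n) hBn0
    have hBq := B_le (n.divisors.card / 3) hq
    have hlt := pow63 (n.divisors.card / 3) hq
    have ht1 : 1 ≤ n.divisors.card := by
      have : n.divisors.Nonempty := ⟨1, Nat.one_mem_divisors.mpr (by omega)⟩
      exact Finset.card_pos.mpr this
    have h2 : (2:ℕ)^(3 * (n.divisors.card / 3) - 1) ≤ 2^(n.divisors.card - 1) :=
      Nat.pow_le_pow_right (by norm_num) (by omega)
    have h4 : (2:ℕ)^(n.divisors.card - 1) ≤ 2^((B n).primeFactors.card) :=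
      Nat.pow_le_pow_right (by norm_num) homega
    omega
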